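/- Let K1 = K(α1,…,αn) and K2 = K(β1,…,βm) be convex polygons (convex hulls of finite point sets) in ℂ. Then the Minkowski product K1K2 is star-shaped if and only if there exists p ∈ K1K2 such that the segment K(p, αiβj) is contained in K1K2 for all 1 ≤ i ≤ n and 1 ≤ j ≤ m. -/

import Mathlib

open Set

namespace Stmt9Aux

open Complex

lemma posre {u v : ℂ} (hu : 0 < u.re) (hv : 0 < v.re) (him : (u*v).im = 0) : 0 < (u*v).re := by
  rw [Complex.mul_im] at him
  rw [Complex.mul_re]
  have h1 : u.im * (u.re * v.im + u.im * v.re) = 0 := by rw [him]; ring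
  have h2 : u.re * (u.re * v.re - u.im * v.im) = v.re * (u.re^2 + u.im^2) := by nlinarith [h1]
  nlinarith [mul_pos hv (by positivity : (0:ℝ) < u.re^2 + u.im^2)]


-- separation: K compact convex not containing 0 gives w with Re(z * conj w) > 0 on K
lemma exists_halfplane {K : Set ℂ} (hK : Convex ℝ K) (hcl : IsClosed K) (h0 : (0:ℂ) ∉ K) :
    ∃ w : ℂ, ∀ a ∈ K, 0 < (a * (starRingEnd ℂ) w).re := by
  obtain ⟨f, u, hfa, hu⟩ := geometric_hahn_banach_closed_point hK hcl h0
  rw [map_zero] at hu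
  -- g := -f ; g a > -u > 0 on K
  refine ⟨Complex.mk (-(f 1)) (-(f I)), fun a ha => ?_⟩
  have hrepr : a = (a.re : ℝ) • (1:ℂ) + (a.im : ℝ) • I := by
    simp [Complex.real_smul, Complex.re_add_im]
  have hfa' : f a = a.re * f 1 + a.im * f I := by
    conv_lhs => rw [hrepr]
    rw [map_add, map_smul, map_smul, smul_eq_mul, smul_eq_mul]
  have : (a * (starRingEnd ℂ) (Complex.mk (-(f 1)) (-(f I)))).re = -(f a) := by
    simp [Complex.mul_re, Complex.conj_re, Complex.conj_im, hfa']
    ring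
  rw [this]
  have := hfa a ha
  linarith


lemma real_ratio {z w : ℂ} (hz : z ≠ 0) (h : (w * (starRingEnd ℂ) z).im = 0) :
    w = (((w * (starRingEnd ℂ) z).re / Complex.normSq z) : ℝ) • z := by
  set R : ℝ := (w * (starRingEnd ℂ) z).re with hR
  have hns : (Complex.normSq z : ℝ) ≠ 0 := by simpa using hz
  have hns' : ((Complex.normSq z : ℝ) : ℂ) ≠ 0 := by exact_mod_cast hns
  have h1 : w * (starRingEnd ℂ) z = (R : ℂ) := by
    apply Complex.ext <;> simp [h, hR]
  have h2 : w * ((starRingEnd ℂ) z * z) = (R : ℂ) * z := by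
    rw [← mul_assoc, h1]
  rw [show (starRingEnd ℂ) z * z = ((Complex.normSq z : ℝ) : ℂ) by
    rw [mul_comm, Complex.mul_conj]] at h2
  rw [Complex.real_smul]
  push_cast
  rw [div_mul_eq_mul_div, eq_div_iff hns', mul_comm w _] at *
  exact h2

lemma im_expand (a1 a2 b1 b2 z : ℂ) (s u : ℝ) :
    ((((1-s)•a1 + s•a2) * ((1-u)•b1 + u•b2)) * (starRingEnd ℂ) z).im =
      (1-s)*(1-u)*((a1*b1*(starRingEnd ℂ) z).im) + s*(1-u)*((a2*b1*(starRingEnd ℂ) z).im)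
      + (1-s)*u*((a1*b2*(starRingEnd ℂ) z).im) + s*u*((a2*b2*(starRingEnd ℂ) z).im) := by
  have : (((1-s)•a1 + s•a2) * ((1-u)•b1 + u•b2)) * (starRingEnd ℂ) z =
      ((1-s)*(1-u))•(a1*b1*(starRingEnd ℂ) z) + (s*(1-u))•(a2*b1*(starRingEnd ℂ) z)
      + ((1-s)*u)•(a1*b2*(starRingEnd ℂ) z) + (s*u)•(a2*b2*(starRingEnd ℂ) z) := by
    simp only [Complex.real_smul]
    push_cast
    ring
  rw [this]
  simp [Complex.add_im, Complex.smul_im]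


lemma psi_zero {κ1 κ2 s : ℝ} (hD : s*κ1 - (1-s)*κ2 ≠ 0) :
    s * (1 - (s*κ1/(s*κ1 - (1-s)*κ2))) * κ1 + (1-s) * (s*κ1/(s*κ1 - (1-s)*κ2)) * κ2 = 0 := by
  field_simp
  ring

lemma radial_main {K1 K2 : Set ℂ} (h1 : Convex ℝ K1) (h2 : Convex ℝ K2)
    {a1 b1 a2 b2 : ℂ} (ha1 : a1 ∈ K1) (hb1 : b1 ∈ K2) (ha2 : a2 ∈ K1) (hb2 : b2 ∈ K2)
    {r ρ : ℝ} (hz : a1 * b1 ≠ 0) (hr : a2 * b2 = (r:ℝ) • (a1*b1)) (h1ρ : 1 ≤ ρ) (hρr : ρ ≤ r)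
    (him : 0 < (a2 * (starRingEnd ℂ) a1).im) :
    ∃ a ∈ K1, ∃ b ∈ K2, a * b = (ρ:ℝ) • (a1 * b1) := by
  have hrpos : (0:ℝ) < r := lt_of_lt_of_le (by linarith) hρr
  have ha1n : a1 ≠ 0 := fun h => hz (by simp [h])
  have hb1n : b1 ≠ 0 := fun h => hz (by simp [h])
  have hzn2 : a2 * b2 ≠ 0 := by
    rw [hr, Complex.real_smul]
    exact mul_ne_zero (by exact_mod_cast ne_of_gt hrpos) hz
  have ha2n : a2 ≠ 0 := fun h => hzn2 (by simp [h])
  have hb2n : b2 ≠ 0 := fun h => hzn2 (by simp [h])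
  set C := starRingEnd ℂ with hC
  set z := a1 * b1 with hzdef
  set κ1 : ℝ := (a2*b1*C z).im with hκ1def
  set κ2 : ℝ := (a1*b2*C z).im with hκ2def
  have hκ1 : κ1 = Complex.normSq b1 * (a2 * C a1).im := by
    rw [hκ1def, hzdef, map_mul]
    rw [show a2 * b1 * (C a1 * C b1) = ((b1 * C b1)) * (a2 * C a1) by ring]
    rw [Complex.mul_conj, Complex.im_ofReal_mul]
  have hκ1pos : 0 < κ1 := by
    rw [hκ1]
    exact mul_pos (Complex.normSq_pos.2 hb1n) him
  have hκ2' : r * κ2 = - (Complex.normSq b2 * (a2 * C a1).im) := by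
    have e2 : (a1*b2*C (a2*b2)).im = Complex.normSq b2 * (a1 * C a2).im := by
      rw [show a1*b2*C (a2*b2) = (b2 * C b2) * (a1 * C a2) by rw [map_mul]; ring]
      rw [Complex.mul_conj, Complex.im_ofReal_mul]
    have e3 : a1*b2*C (a2*b2) = (r:ℂ) * (a1*b2* C z) := by
      rw [hr, Complex.real_smul, map_mul]
      rw [show C (r:ℂ) = (r:ℂ) by exact Complex.conj_ofReal r]
      ring
    have e4 : (a1 * C a2).im = - (a2 * C a1).im := by
      simp [hC, Complex.mul_im]; ring
    rw [e3, Complex.im_ofReal_mul, ← hκ2def] at e2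
    rw [e2, e4]
    ring
  have hκ2neg : κ2 < 0 := by
    have hb2ns : 0 < Complex.normSq b2 := Complex.normSq_pos.2 hb2n
    nlinarith
  have hDpos : ∀ s ∈ Set.Icc (0:ℝ) 1, 0 < s*κ1 - (1-s)*κ2 := by
    intro s hs
    rcases eq_or_lt_of_le hs.1 with h0 | h0
    · rw [← h0]; ring_nf; linarith
    · nlinarith [mul_nonneg (by linarith [hs.2] : (0:ℝ) ≤ 1-s) (by linarith : (0:ℝ) ≤ -κ2)]
  have huu01 : ∀ s ∈ Set.Icc (0:ℝ) 1, s * κ1 / (s*κ1 - (1-s)*κ2) ∈ Set.Icc (0:ℝ) 1 := by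
    intro s hs
    have hD := hDpos s hs
    constructor
    · exact div_nonneg (mul_nonneg hs.1 (le_of_lt hκ1pos)) (le_of_lt hD)
    · rw [div_le_one hD]
      nlinarith [mul_nonneg (by linarith [hs.2] : (0:ℝ) ≤ 1-s) (by linarith : (0:ℝ) ≤ -κ2)]
  set uu : ℝ → ℝ := fun s => s * κ1 / (s*κ1 - (1-s)*κ2) with huu
  set x : ℝ → ℂ := fun s => ((1-s)•a1 + s•a2) * ((1-uu s)•b1 + (uu s)•b2) with hx
  have hx_im : ∀ s ∈ Set.Icc (0:ℝ) 1, ((x s) * C z).im = 0 := by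
    intro s hs
    rw [hx]
    simp only
    rw [im_expand]
    have hz0 : (a1*b1*C z).im = 0 := by
      rw [hzdef, Complex.mul_conj]; simp
    have hz1 : (a2*b2*C z).im = 0 := by
      rw [hr, Complex.real_smul, mul_assoc, Complex.mul_conj]
      norm_cast
    rw [hz0, hz1, ← hκ1def, ← hκ2def]
    have := psi_zero (ne_of_gt (hDpos s hs)) (κ1 := κ1) (κ2 := κ2)
    rw [huu]
    simp only
    linarith [this]
  -- continuity
  have hns : Complex.normSq z ≠ 0 := by simpa using hz
  have huucont : ContinuousOn uu (Set.Icc (0:ℝ) 1) := by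
    apply ContinuousOn.div
    · exact (continuous_id.mul continuous_const).continuousOn
    · exact ((continuous_id.mul continuous_const).sub
        ((continuous_const.sub continuous_id).mul continuous_const)).continuousOn
    · exact fun s hs => ne_of_gt (hDpos s hs)
  have hxcont : ContinuousOn x (Set.Icc (0:ℝ) 1) := by
    rw [hx]
    apply ContinuousOn.mul
    · exact (((continuous_const.sub continuous_id).smul continuous_const).add
        (continuous_id.smul continuous_const)).continuousOn
    · exact (((continuousOn_const.sub huucont).smul continuousOn_const).add
        (huucont.smul continuousOn_const))
  set ξ : ℝ → ℝ := fun s => (x s * C z).re / Complex.normSq z with hξ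
  have hξcont : ContinuousOn ξ (Set.Icc (0:ℝ) 1) := by
    apply ContinuousOn.div_const
    exact Complex.continuous_re.comp_continuousOn (hxcont.mul continuousOn_const)
  have huu0 : uu 0 = 0 := by rw [huu]; simp
  have huu1 : uu 1 = 1 := by
    rw [huu]; simp
    exact ne_of_gt hκ1pos
  have hx0 : x 0 = z := by
    rw [hx]; simp only [huu0]
    norm_num
    rfl
  have hx1 : x 1 = (r:ℂ) * z := by
    rw [hx]; simp only [huu1]
    norm_num
    rw [← Complex.real_smul, ← hr]
  have hξ0 : ξ 0 = 1 := by
    rw [hξ]; simp only [hx0, hC, Complex.mul_conj, Complex.ofReal_re]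
    exact div_self hns
  have hξ1 : ξ 1 = r := by
    rw [hξ]; simp only [hx1, mul_assoc, hC, Complex.mul_conj]
    rw [← Complex.ofReal_mul, Complex.ofReal_re, mul_div_assoc, div_self hns, mul_one]
  have hIVT := intermediate_value_Icc (by norm_num : (0:ℝ) ≤ 1) hξcont
  rw [hξ0, hξ1] at hIVT
  obtain ⟨s0, hs0, hξs0⟩ := hIVT ⟨h1ρ, hρr⟩
  refine ⟨(1-s0)•a1 + s0•a2, h1 ha1 ha2 (by linarith [hs0.2]) hs0.1 (by ring), 
          (1-uu s0)•b1 + (uu s0)•b2, ?_, ?_⟩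
  · have := huu01 s0 hs0
    exact h2 hb1 hb2 (by linarith [this.2]) this.1 (by ring)
  · have hw := real_ratio hz (hx_im s0 hs0)
    show x s0 = ρ • z
    rw [hw, show ((x s0 * (starRingEnd ℂ) z).re / Complex.normSq z) = ρ from hξs0]


lemma affine_hit {x y ρ : ℝ} (h1 : min x y ≤ ρ) (h2 : ρ ≤ max x y) :
    ∃ u ∈ Set.Icc (0:ℝ) 1, (1-u)*x + u*y = ρ := by
  rcases le_total x y with hxy | hxy
  · rw [min_eq_left hxy] at h1
    rw [max_eq_right hxy] at h2
    rcases eq_or_lt_of_le hxy with he | hlt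
    · exact ⟨0, by norm_num, by rw [← he] at h2 ⊢; nlinarith⟩
    · refine ⟨(ρ - x)/(y - x), ⟨div_nonneg (by linarith) (by linarith), ?_⟩, ?_⟩
      · rw [div_le_one (by linarith)]; linarith
      · have hne : y - x ≠ 0 := by linarith
        field_simp
        ring
  · rw [min_eq_right hxy] at h1
    rw [max_eq_left hxy] at h2
    rcases eq_or_lt_of_le hxy with he | hlt
    · exact ⟨0, by norm_num, by rw [he] at h1 ⊢; nlinarith⟩
    · have hval : (ρ - x)/(y - x) = (x - ρ)/(x - y) := by
        rw [div_eq_div_iff (by linarith) (by linarith)]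
        ring
      refine ⟨(ρ - x)/(y - x), ⟨?_, ?_⟩, ?_⟩
      · rw [hval]
        exact div_nonneg (by linarith) (by linarith)
      · rw [hval, div_le_one (by linarith)]
        linarith
      · have hne : y - x ≠ 0 := by linarith
        field_simp
        ring

lemma radial_deg {K1 K2 : Set ℂ} (h1 : Convex ℝ K1) (h2 : Convex ℝ K2)
    {a1 b1 a2 b2 : ℂ} (ha1 : a1 ∈ K1) (hb1 : b1 ∈ K2) (ha2 : a2 ∈ K1) (hb2 : b2 ∈ K2)
    {r ρ : ℝ} (hz : a1 * b1 ≠ 0) (hr : a2 * b2 = (r:ℝ) • (a1*b1)) (h1ρ : 1 ≤ ρ) (hρr : ρ ≤ r)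
    (him : (a2 * (starRingEnd ℂ) a1).im = 0) :
    ∃ a ∈ K1, ∃ b ∈ K2, a * b = (ρ:ℝ) • (a1 * b1) := by
  have hrpos : (0:ℝ) < r := lt_of_lt_of_le (by linarith) hρr
  have ha1n : a1 ≠ 0 := fun h => hz (by simp [h])
  have hb1n : b1 ≠ 0 := fun h => hz (by simp [h])
  have hzn2 : a2 * b2 ≠ 0 := by
    rw [hr, Complex.real_smul]
    exact mul_ne_zero (by exact_mod_cast ne_of_gt hrpos) hz
  have ha2n : a2 ≠ 0 := fun h => hzn2 (by simp [h])
  have hb2n : b2 ≠ 0 := fun h => hzn2 (by simp [h])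
  set c : ℝ := (a2 * (starRingEnd ℂ) a1).re / Complex.normSq a1 with hcdef
  have hc : a2 = (c:ℝ) • a1 := real_ratio ha1n him
  have hcn : c ≠ 0 := by
    intro h0
    rw [h0, zero_smul] at hc
    exact ha2n hc
  have hcne : (c:ℂ) ≠ 0 := by exact_mod_cast hcn
  have hb2e : b2 = ((r/c : ℝ)) • b1 := by
    have h4 : (c:ℂ) * b2 = (r:ℂ) * b1 := by
      apply mul_left_cancel₀ ha1n
      have hc' : a2 = (c:ℂ) * a1 := by rw [hc, Complex.real_smul]
      have hr' : a2 * b2 = (r:ℂ) * (a1 * b1) := by rw [hr, Complex.real_smul]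
      calc a1 * ((c:ℂ) * b2) = ((c:ℂ) * a1) * b2 := by ring
        _ = a2 * b2 := by rw [← hc']
        _ = (r:ℂ) * (a1 * b1) := hr'
        _ = a1 * ((r:ℂ) * b1) := by ring
    rw [Complex.real_smul]
    push_cast
    rw [div_mul_eq_mul_div, eq_comm, div_eq_iff hcne, mul_comm b2 _, ← h4]
  rcases le_total ρ (r/c) with hcase | hcase
  · -- use a1 and segment b1..b2
    have hmin : min 1 (r/c) ≤ ρ ∧ ρ ≤ max 1 (r/c) := by
      constructor
      · exact le_trans (min_le_left _ _) h1ρ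
      · exact le_trans hcase (le_max_right _ _)
    obtain ⟨u, hu, hueq⟩ := affine_hit hmin.1 hmin.2
    refine ⟨a1, ha1, (1-u)•b1 + u•b2, h2 hb1 hb2 (by linarith [hu.2]) hu.1 (by ring), ?_⟩
    rw [hb2e]
    rw [mul_add]
    rw [smul_smul]
    rw [mul_smul_comm, mul_smul_comm]
    rw [← hueq]
    rw [show ((1:ℝ)-u) • (a1 * b1) + (u * (r / c)) • (a1 * b1) = ((1-u)*1 + u*(r/c)) • (a1*b1) by
      rw [add_smul]; norm_num]
  · -- use b2 and segment a1..a2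
    have hmin : min (r/c) r ≤ ρ ∧ ρ ≤ max (r/c) r := by
      constructor
      · exact le_trans (min_le_left _ _) hcase
      · exact le_trans hρr (le_max_right _ _)
    obtain ⟨u, hu, hueq⟩ := affine_hit hmin.1 hmin.2
    refine ⟨(1-u)•a1 + u•a2, h1 ha1 ha2 (by linarith [hu.2]) hu.1 (by ring), b2, hb2, ?_⟩
    rw [add_mul]
    have e1 : a1 * b2 = (r/c : ℝ) • (a1 * b1) := by
      rw [hb2e, mul_smul_comm]
    have e2 : a2 * b2 = (r:ℝ) • (a1 * b1) := hr
    rw [smul_mul_assoc, smul_mul_assoc, e1, e2, smul_smul, smul_smul, ← add_smul, hueq]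

lemma radial {K1 K2 : Set ℂ} (h1 : Convex ℝ K1) (h2 : Convex ℝ K2)
    {a1 b1 a2 b2 : ℂ} (ha1 : a1 ∈ K1) (hb1 : b1 ∈ K2) (ha2 : a2 ∈ K1) (hb2 : b2 ∈ K2)
    {r ρ : ℝ} (hz : a1 * b1 ≠ 0) (hr : a2 * b2 = (r:ℝ) • (a1*b1)) (h1ρ : 1 ≤ ρ) (hρr : ρ ≤ r) :
    ∃ a ∈ K1, ∃ b ∈ K2, a * b = (ρ:ℝ) • (a1 * b1) := by
  rcases lt_trichotomy ((a2 * (starRingEnd ℂ) a1).im) 0 with hneg | hzero | hpos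
  · have hrpos : (0:ℝ) < r := lt_of_lt_of_le (by linarith) hρr
    set P : ℝ := r * Complex.normSq (a1*b1) with hP
    have hPpos : 0 < P := mul_pos hrpos (Complex.normSq_pos.2 hz)
    have hUV : (a2 * (starRingEnd ℂ) a1) * (b2 * (starRingEnd ℂ) b1) = ((P:ℝ):ℂ) := by
      rw [show (a2 * (starRingEnd ℂ) a1) * (b2 * (starRingEnd ℂ) b1)
          = (a2*b2) * ((starRingEnd ℂ) a1 * (starRingEnd ℂ) b1) by ring]
      rw [← map_mul, hr, Complex.real_smul, mul_assoc, Complex.mul_conj, hP]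
      push_cast
      ring
    have hUn : (a2 * (starRingEnd ℂ) a1) ≠ 0 := by
      intro h0
      rw [h0, zero_mul] at hUV
      have : P = 0 := by exact_mod_cast hUV.symm
      linarith
    have hV : (b2 * (starRingEnd ℂ) b1) = ((P:ℝ):ℂ) * (a2 * (starRingEnd ℂ) a1)⁻¹ := by
      field_simp
      rw [mul_comm] at hUV
      rw [eq_div_iff hUn]; exact hUV
    have him' : 0 < (b2 * (starRingEnd ℂ) b1).im := by
      rw [hV, Complex.im_ofReal_mul, Complex.inv_im]
      have : 0 < Complex.normSq (a2 * (starRingEnd ℂ) a1) := Complex.normSq_pos.2 hUn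
      apply mul_pos hPpos
      apply div_pos (by linarith) this
    obtain ⟨b, hb, a, ha, heq⟩ := radial_main h2 h1 hb1 ha1 hb2 ha2
      (by rwa [mul_comm]) (by rw [mul_comm b2 a2, mul_comm b1 a1]; exact hr) h1ρ hρr him'
    exact ⟨a, ha, b, hb, by rw [mul_comm a b, heq, mul_comm b1 a1]⟩
  · exact radial_deg h1 h2 ha1 hb1 ha2 hb2 hz hr h1ρ hρr hzero
  · exact radial_main h1 h2 ha1 hb1 ha2 hb2 hz hr h1ρ hρr hpos


lemma split_core (w0 : ℂ) (t : Finset ℂ) (c : ℂ → ℝ) (hc0 : ∀ x ∈ t, 0 ≤ c x)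
    (hc1 : ∑ x ∈ t, c x = 1) (q : ℂ) (hq : ∑ x ∈ t, c x • x = q)
    (hfq : (q * (starRingEnd ℂ) w0).im = 0) :
    ∃ (d : ℂ × ℂ → ℝ) (y : ℂ × ℂ → ℂ),
      (∀ e ∈ t ×ˢ t, 0 ≤ d e) ∧ (∑ e ∈ t ×ˢ t, d e = 1) ∧ (∑ e ∈ t ×ˢ t, d e • y e = q) ∧
      (∀ e ∈ t ×ˢ t, d e ≠ 0 →
        y e ∈ segment ℝ e.1 e.2 ∧ (y e * (starRingEnd ℂ) w0).im = 0) := by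
  set F : ℂ → ℝ := fun x => (x * (starRingEnd ℂ) w0).im with hF
  have Fsmul : ∀ (a : ℝ) (x : ℂ), F (a • x) = a * F x := by
    intro a x
    rw [hF]
    simp only [Complex.real_smul, mul_assoc, Complex.im_ofReal_mul]
  have Fadd : ∀ x y : ℂ, F (x + y) = F x + F y := by
    intro x y
    rw [hF]
    simp only [add_mul, Complex.add_im]
  have Fsum : ∑ x ∈ t, c x * F x = 0 := by
    rw [← hfq, ← hq, hF]
    simp only [Finset.sum_mul]
    rw [Complex.im_sum]
    apply Finset.sum_congr rfl
    intro x hx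
    simp only [Complex.real_smul, mul_assoc, Complex.im_ofReal_mul]
  set P : Finset ℂ := t.filter (fun x => 0 ≤ F x) with hP
  set N : Finset ℂ := t.filter (fun x => ¬ 0 ≤ F x) with hN
  have hPsub : P ⊆ t := Finset.filter_subset _ _
  have hNsub : N ⊆ t := Finset.filter_subset _ _
  set A : ℝ := ∑ x ∈ P, c x * F x with hA
  have hApos : 0 ≤ A := Finset.sum_nonneg fun x hx => by
    rw [hP] at hx
    rw [Finset.mem_filter] at hx
    exact mul_nonneg (hc0 x hx.1) hx.2
  have hNA : ∑ x ∈ N, c x * F x = -A := by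
    have := Finset.sum_filter_add_sum_filter_not t (fun x => 0 ≤ F x) (fun x => c x * F x)
    rw [← hP, ← hN, ← hA] at this
    linarith [this.symm ▸ Fsum]
  rcases eq_or_lt_of_le hApos with hA0 | hA0
  · -- degenerate: all c x * F x = 0
    have hzero : ∀ x ∈ t, c x ≠ 0 → F x = 0 := by
      intro x hx hcx
      by_cases hxP : 0 ≤ F x
      · have hxP' : x ∈ P := by rw [hP, Finset.mem_filter]; exact ⟨hx, hxP⟩
        have : ∀ y ∈ P, 0 ≤ c y * F y := fun y hy => by
          rw [hP, Finset.mem_filter] at hy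
          exact mul_nonneg (hc0 y hy.1) hy.2
        have := (Finset.sum_eq_zero_iff_of_nonneg this).1 hA0.symm x hxP'
        rcases mul_eq_zero.1 this with h | h
        · exact absurd h hcx
        · exact h
      · have hxN : x ∈ N := by rw [hN, Finset.mem_filter]; exact ⟨hx, hxP⟩
        have hnonneg : ∀ y ∈ N, 0 ≤ c y * (- F y) := fun y hy => by
          rw [hN, Finset.mem_filter] at hy
          exact mul_nonneg (hc0 y hy.1) (by push_neg at hy; linarith [hy.2])
        have hsum0 : ∑ y ∈ N, c y * (- F y) = 0 := by
          have : ∑ y ∈ N, c y * (- F y) = - ∑ y ∈ N, c y * F y := by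
            rw [← Finset.sum_neg_distrib]
            apply Finset.sum_congr rfl
            intros; ring
          rw [this, hNA, ← hA0]
          ring
        have := (Finset.sum_eq_zero_iff_of_nonneg hnonneg).1 hsum0 x hxN
        rcases mul_eq_zero.1 this with h | h
        · exact absurd h hcx
        · linarith [h]
    refine ⟨fun e => if e.1 = e.2 then c e.1 else 0, fun e => e.1, ?_, ?_, ?_, ?_⟩
    · intro e he
      rw [Finset.mem_product] at he
      dsimp only
      split_ifs with h
      · exact hc0 e.1 he.1
      · exact le_rfl
    · dsimp only
      rw [Finset.sum_product]
      rw [show (1:ℝ) = ∑ x ∈ t, c x from hc1.symm]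
      apply Finset.sum_congr rfl
      intro x hx
      rw [Finset.sum_ite_eq t x (fun _ => c x), if_pos hx]
    · dsimp only
      rw [Finset.sum_product, ← hq]
      apply Finset.sum_congr rfl
      intro x hx
      have : ∀ y ∈ t, (if x = y then c x else 0) • (x : ℂ) = (if x = y then c x • x else 0) := by
        intro y hy
        split_ifs <;> simp
      rw [Finset.sum_congr rfl this, Finset.sum_ite_eq t x (fun _ => c x • x), if_pos hx]
    · intro e he hd
      dsimp only at hd ⊢
      split_ifs at hd with h
      · refine ⟨by rw [h]; exact left_mem_segment ℝ e.2 e.2, ?_⟩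
        rw [Finset.mem_product] at he
        exact hzero e.1 he.1 hd
      · exact absurd rfl hd
  · -- main case A > 0
    have hsplit : ∀ x ∈ t, x ∈ P ∨ x ∈ N := by
      intro x hx
      by_cases h : 0 ≤ F x
      · exact Or.inl (by rw [hP, Finset.mem_filter]; exact ⟨hx, h⟩)
      · exact Or.inr (by rw [hN, Finset.mem_filter]; exact ⟨hx, h⟩)
    have hsum_split : ∀ g : ℂ → ℝ, ∑ x ∈ t, g x = ∑ x ∈ P, g x + ∑ x ∈ N, g x := by
      intro g
      rw [hP, hN, Finset.sum_filter_add_sum_filter_not]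
    have hsum_splitC : ∀ g : ℂ → ℂ, ∑ x ∈ t, g x = ∑ x ∈ P, g x + ∑ x ∈ N, g x := by
      intro g
      rw [hP, hN, Finset.sum_filter_add_sum_filter_not]
    have hPN : ∀ x ∈ P, ∀ y ∈ N, 0 < F x - F y := by
      intro x hx y hy
      rw [hP, Finset.mem_filter] at hx
      rw [hN, Finset.mem_filter] at hy
      push_neg at hy
      linarith [hx.2, hy.2]
    have hPNsub : P ×ˢ N ⊆ t ×ˢ t := Finset.product_subset_product hPsub hNsub
    refine ⟨fun e => if e ∈ P ×ˢ N then c e.1 * c e.2 * (F e.1 - F e.2) / A else 0,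
      fun e => (-(F e.2)/(F e.1 - F e.2)) • e.1 + (F e.1/(F e.1 - F e.2)) • e.2, ?_, ?_, ?_, ?_⟩
    · intro e he
      dsimp only
      split_ifs with h
      · rw [Finset.mem_product] at h
        apply div_nonneg _ (le_of_lt hA0)
        apply mul_nonneg (mul_nonneg (hc0 e.1 (hPsub h.1)) (hc0 e.2 (hNsub h.2)))
        linarith [hPN e.1 h.1 e.2 h.2]
      · exact le_rfl
    · dsimp only
      rw [Finset.sum_ite_mem, Finset.inter_eq_right.2 hPNsub]
      rw [Finset.sum_product]
      have : ∀ x ∈ P, ∑ y ∈ N, c x * c y * (F x - F y) / A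
          = (c x * F x * (∑ y ∈ N, c y) - c x * (∑ y ∈ N, c y * F y)) / A := by
        intro x hx
        rw [Finset.mul_sum, Finset.mul_sum, ← Finset.sum_div, ← Finset.sum_sub_distrib]
        congr 1
        apply Finset.sum_congr rfl
        intros; ring
      rw [Finset.sum_congr rfl this]
      rw [hNA]
      have : ∑ x ∈ P, (c x * F x * (∑ y ∈ N, c y) - c x * -A) / A
          = ((∑ x ∈ P, c x * F x) * (∑ y ∈ N, c y) + (∑ x ∈ P, c x) * A) / A := by
        rw [← Finset.sum_div]
        congr 1
        rw [Finset.sum_sub_distrib, ← Finset.sum_mul, ← Finset.sum_mul]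
        ring
      rw [this, ← hA]
      have h1 : (∑ x ∈ P, c x) + (∑ y ∈ N, c y) = 1 := by rw [← hsum_split]; exact hc1
      field_simp
      linear_combination h1
    · dsimp only
      simp only [ite_smul, zero_smul]
      rw [Finset.sum_ite_mem, Finset.inter_eq_right.2 hPNsub]
      have hstep : ∀ e ∈ P ×ˢ N,
          (c e.1 * c e.2 * (F e.1 - F e.2) / A) •
            ((-(F e.2)/(F e.1 - F e.2)) • e.1 + (F e.1/(F e.1 - F e.2)) • e.2)
          = (-(c e.1 * c e.2 * F e.2)/A) • e.1 + ((c e.1 * F e.1 * c e.2)/A) • e.2 := by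
        intro e he
        rw [Finset.mem_product] at he
        have hden := hPN e.1 he.1 e.2 he.2
        rw [smul_add, smul_smul, smul_smul]
        congr 1
        · congr 1
          field_simp
        · congr 1
          field_simp
      rw [Finset.sum_congr rfl hstep, Finset.sum_add_distrib]
      have hpart1 : ∑ e ∈ P ×ˢ N, (-(c e.1 * c e.2 * F e.2)/A) • e.1 = ∑ x ∈ P, c x • x := by
        rw [Finset.sum_product]
        apply Finset.sum_congr rfl
        intro x hx
        rw [← Finset.sum_smul]
        congr 1
        have : ∀ y ∈ N, -(c x * c y * F y)/A = (-(c x)/A) * (c y * F y) := by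
          intros; ring
        rw [Finset.sum_congr rfl this, ← Finset.mul_sum, hNA]
        field_simp
      have hpart2 : ∑ e ∈ P ×ˢ N, ((c e.1 * F e.1 * c e.2)/A) • e.2 = ∑ y ∈ N, c y • y := by
        rw [Finset.sum_product]
        rw [Finset.sum_comm]
        apply Finset.sum_congr rfl
        intro y hy
        rw [← Finset.sum_smul]
        congr 1
        have : ∀ x ∈ P, (c x * F x * c y)/A = (c y/A) * (c x * F x) := by
          intros; ring
        rw [Finset.sum_congr rfl this, ← Finset.mul_sum, ← hA]
        field_simp
      rw [hpart1, hpart2, ← hsum_splitC (fun x => c x • x), hq]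
    · intro e he hd
      dsimp only at hd ⊢
      split_ifs at hd with h
      · rw [Finset.mem_product] at h
        have hden := hPN e.1 h.1 e.2 h.2
        have hFx : 0 ≤ F e.1 := by
          have := h.1; rw [hP, Finset.mem_filter] at this; exact this.2
        have hFy : F e.2 < 0 := by
          have := h.2; rw [hN, Finset.mem_filter] at this; push_neg at this; exact this.2
        constructor
        · refine ⟨-(F e.2)/(F e.1 - F e.2), F e.1/(F e.1 - F e.2), ?_, ?_, ?_, rfl⟩
          · exact div_nonneg (by linarith) (le_of_lt hden)
          · exact div_nonneg hFx (le_of_lt hden)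
          · field_simp
            ring
        · show F ((-(F e.2)/(F e.1 - F e.2)) • e.1 + (F e.1/(F e.1 - F e.2)) • e.2) = 0
          rw [Fadd, Fsmul, Fsmul]
          field_simp
          ring
      · exact absurd rfl hd


lemma seg_mem_hull {t : Finset ℂ} {x y : ℂ} (hx : x ∈ t) (hy : y ∈ t) :
    segment ℝ x y ⊆ convexHull ℝ (t : Set ℂ) :=
  (convex_convexHull ℝ _).segment_subset (subset_convexHull ℝ _ hx) (subset_convexHull ℝ _ hy)

lemma zero_not_mem (S : Set ℂ) (W : ℂ)
    (good : ∀ z ∈ S, ((z * (starRingEnd ℂ) W).im = 0 → 0 < (z * (starRingEnd ℂ) W).re))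
    (t : Finset ℂ) (hseg : ∀ x ∈ t, ∀ y ∈ t, segment ℝ x y ⊆ S) :
    (0:ℂ) ∉ convexHull ℝ (t : Set ℂ) := by
  intro h0
  rw [Finset.mem_convexHull'] at h0
  obtain ⟨c, hc0, hc1, hcq⟩ := h0
  obtain ⟨d, y, hd0, hd1, hdq, hsupp⟩ := split_core W t c hc0 hc1 0 hcq (by simp)
  have hre : ∑ e ∈ t ×ˢ t, d e * ((y e * (starRingEnd ℂ) W).re) = 0 := by
    have : ((∑ e ∈ t ×ˢ t, d e • y e) * (starRingEnd ℂ) W).re = 0 := by rw [hdq]; simp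
    rw [← this, Finset.sum_mul, Complex.re_sum]
    apply Finset.sum_congr rfl
    intro e he
    rw [Complex.real_smul, mul_assoc, Complex.re_ofReal_mul]
  obtain ⟨e0, he0, hde0⟩ := Finset.exists_ne_zero_of_sum_ne_zero (hd1.symm ▸ one_ne_zero)
  have hpos : 0 < ∑ e ∈ t ×ˢ t, d e * ((y e * (starRingEnd ℂ) W).re) := by
    apply Finset.sum_pos'
    · intro e he
      by_cases hd : d e = 0
      · rw [hd]; simp
      · have hyS : y e ∈ S := by
          rw [Finset.mem_product] at he
          exact hseg e.1 he.1 e.2 he.2 (hsupp e (Finset.mem_product.2 he) hd).1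
        have := good _ hyS (hsupp e (Finset.mem_product.2 (Finset.mem_product.1 he)) hd).2
        exact mul_nonneg (hd0 e (Finset.mem_product.2 (Finset.mem_product.1 he))) (le_of_lt this)
    · refine ⟨e0, he0, ?_⟩
      have hyS : y e0 ∈ S := by
        rw [Finset.mem_product] at he0
        exact hseg e0.1 he0.1 e0.2 he0.2 (hsupp e0 (Finset.mem_product.2 he0) hde0).1
      have hgood := good _ hyS (hsupp e0 (Finset.mem_product.2 (Finset.mem_product.1 he0)) hde0).2
      have : 0 < d e0 := lt_of_le_of_ne (hd0 e0 he0) (Ne.symm hde0)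
      exact mul_pos this hgood
  linarith [hre, hpos]

lemma fill (S : Set ℂ) (W : ℂ)
    (good : ∀ z ∈ S, ((z * (starRingEnd ℂ) W).im = 0 → 0 < (z * (starRingEnd ℂ) W).re))
    (hrad : ∀ z ∈ S, z ≠ 0 → ∀ r ρ : ℝ, r • z ∈ S → 1 ≤ ρ → ρ ≤ r → ρ • z ∈ S)
    (t : Finset ℂ) (hseg : ∀ x ∈ t, ∀ y ∈ t, segment ℝ x y ⊆ S) :
    convexHull ℝ (t : Set ℂ) ⊆ S := by
  intro w hw
  have h0 := zero_not_mem S W good t hseg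
  have hwne : w ≠ 0 := fun h => h0 (h ▸ hw)
  have hw' := hw
  rw [Finset.mem_convexHull'] at hw'
  obtain ⟨c, hc0, hc1, hcq⟩ := hw'
  have hfw : (w * (starRingEnd ℂ) w).im = 0 := by rw [Complex.mul_conj]; simp
  obtain ⟨d, y, hd0, hd1, hdq, hsupp⟩ := split_core w t c hc0 hc1 w hcq hfw
  set ζ : ℂ × ℂ → ℝ := fun e => (y e * (starRingEnd ℂ) w).re / Complex.normSq w with hζ
  have hyζ : ∀ e ∈ t ×ˢ t, d e ≠ 0 → y e = ζ e • w :=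
    fun e he hd => real_ratio hwne (hsupp e he hd).2
  have hyS : ∀ e ∈ t ×ˢ t, d e ≠ 0 → y e ∈ S := by
    intro e he hd
    rw [Finset.mem_product] at he
    exact hseg e.1 he.1 e.2 he.2 (hsupp e (Finset.mem_product.2 he) hd).1
  have hyhull : ∀ e ∈ t ×ˢ t, d e ≠ 0 → y e ∈ convexHull ℝ (t : Set ℂ) := by
    intro e he hd
    rw [Finset.mem_product] at he
    exact seg_mem_hull he.1 he.2 (hsupp e (Finset.mem_product.2 he) hd).1
  have hζpos : ∀ e ∈ t ×ˢ t, d e ≠ 0 → 0 < ζ e := by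
    intro e he hd
    rcases lt_trichotomy (ζ e) 0 with hneg | hzero | hpos
    · exfalso
      apply h0
      have hone : (1:ℝ) - ζ e ≠ 0 := by linarith
      have hmem : (0:ℂ) ∈ segment ℝ (y e) w := by
        refine ⟨1/(1 - ζ e), -(ζ e)/(1 - ζ e), ?_, ?_, ?_, ?_⟩
        · apply div_nonneg (by norm_num) (by linarith)
        · apply div_nonneg (by linarith) (by linarith)
        · field_simp
          ring
        · rw [hyζ e he hd, smul_smul]
          rw [← add_smul]
          have : 1 / (1 - ζ e) * ζ e + -ζ e / (1 - ζ e) = 0 := by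
            field_simp
            ring
          rw [this, zero_smul]
      exact (convex_convexHull ℝ _).segment_subset (hyhull e he hd) hw hmem
    · exfalso
      have : y e = 0 := by rw [hyζ e he hd, hzero, zero_smul]
      have hyS' := hyS e he hd
      rw [this] at hyS'
      have := good 0 hyS' (by simp)
      simp at this
    · exact hpos
  -- sum of d ζ = 1
  have hsum1 : ∑ e ∈ t ×ˢ t, d e * ζ e = 1 := by
    have hterm : ∀ e ∈ t ×ˢ t, d e • y e = (d e * ζ e) • w := by
      intro e he
      by_cases hd : d e = 0
      · rw [hd]; simp
      · rw [hyζ e he hd, smul_smul]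
    have : (∑ e ∈ t ×ˢ t, d e * ζ e) • w = w := by
      rw [Finset.sum_smul, ← Finset.sum_congr rfl hterm]
      exact hdq
    have h2 : ((∑ e ∈ t ×ˢ t, d e * ζ e) - 1) • w = 0 := by
      rw [sub_smul, this, one_smul, sub_self]
    rcases smul_eq_zero.1 h2 with h | h
    · linarith [sub_eq_zero.1 (by exact_mod_cast h)]
    · exact absurd h hwne
  obtain ⟨e0, he0, hde0⟩ := Finset.exists_ne_zero_of_sum_ne_zero (hd1.symm ▸ one_ne_zero)
  -- exists ζ ≥ 1 on support
  have hplus : ∃ e ∈ t ×ˢ t, d e ≠ 0 ∧ 1 ≤ ζ e := by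
    by_contra hcon
    push_neg at hcon
    have hlt : ∑ e ∈ t ×ˢ t, d e * ζ e < ∑ e ∈ t ×ˢ t, d e := by
      apply Finset.sum_lt_sum
      · intro e he
        by_cases hd : d e = 0
        · rw [hd]; simp
        · have := hcon e he hd
          have hdp : 0 < d e := lt_of_le_of_ne (hd0 e he) (Ne.symm hd)
          nlinarith [hζpos e he hd]
      · refine ⟨e0, he0, ?_⟩
        have := hcon e0 he0 hde0
        have hdp : 0 < d e0 := lt_of_le_of_ne (hd0 e0 he0) (Ne.symm hde0)
        nlinarith [hζpos e0 he0 hde0]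
    rw [hsum1, hd1] at hlt
    linarith
  have hminus : ∃ e ∈ t ×ˢ t, d e ≠ 0 ∧ ζ e ≤ 1 := by
    by_contra hcon
    push_neg at hcon
    have hlt : ∑ e ∈ t ×ˢ t, d e < ∑ e ∈ t ×ˢ t, d e * ζ e := by
      apply Finset.sum_lt_sum
      · intro e he
        by_cases hd : d e = 0
        · simp [hd]
        · have := hcon e he hd
          have hdp : 0 < d e := lt_of_le_of_ne (hd0 e he) (Ne.symm hd)
          nlinarith
      · refine ⟨e0, he0, ?_⟩
        have := hcon e0 he0 hde0
        have hdp : 0 < d e0 := lt_of_le_of_ne (hd0 e0 he0) (Ne.symm hde0)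
        nlinarith
    rw [hsum1, hd1] at hlt
    linarith
  obtain ⟨ep, hep, hdep, hζp⟩ := hplus
  obtain ⟨em, hem, hdem, hζm⟩ := hminus
  have hζmpos := hζpos em hem hdem
  have hz1 : ζ em • w ∈ S := by rw [← hyζ em hem hdem]; exact hyS em hem hdem
  have hz1ne : ζ em • w ≠ 0 := smul_ne_zero (ne_of_gt hζmpos) hwne
  have hz2 : (ζ ep / ζ em) • (ζ em • w) ∈ S := by
    rw [smul_smul, div_mul_cancel₀ _ (ne_of_gt hζmpos)]
    rw [← hyζ ep hep hdep]
    exact hyS ep hep hdep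
  have hfin := hrad _ hz1 hz1ne (ζ ep / ζ em) (1 / ζ em) hz2
    (by rw [le_div_iff₀ hζmpos]; linarith)
    (by rw [div_le_div_iff₀ hζmpos hζmpos]; nlinarith)
  rw [smul_smul, one_div, inv_mul_cancel₀ (ne_of_gt hζmpos), one_smul] at hfin
  exact hfin


end Stmt9Aux

open Stmt9Aux Complex in


theorem stmt_9 (n m : ℕ) (α : Fin n → ℂ) (β : Fin m → ℂ)
    (K1 K2 : Set ℂ) (hK1 : K1 = convexHull ℝ (Set.range α))
    (hK2 : K2 = convexHull ℝ (Set.range β)) :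
    (∃ p ∈ Set.image2 (· * ·) K1 K2, ∀ z ∈ Set.image2 (· * ·) K1 K2,
        ∀ t ∈ Set.Icc (0:ℝ) 1, ((1 - t) : ℂ) * p + (t : ℂ) * z ∈ Set.image2 (· * ·) K1 K2) ↔
      (∃ p ∈ Set.image2 (· * ·) K1 K2, ∀ i : Fin n, ∀ j : Fin m,
        segment ℝ p (α i * β j) ⊆ Set.image2 (· * ·) K1 K2) := by
  have hK1conv : Convex ℝ K1 := hK1 ▸ convex_convexHull ℝ _
  have hK2conv : Convex ℝ K2 := hK2 ▸ convex_convexHull ℝ _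
  have hαK1 : ∀ i, α i ∈ K1 := fun i => hK1 ▸ subset_convexHull ℝ _ (mem_range_self i)
  have hβK2 : ∀ j, β j ∈ K2 := fun j => hK2 ▸ subset_convexHull ℝ _ (mem_range_self j)
  set S := Set.image2 (· * ·) K1 K2 with hS
  constructor
  · rintro ⟨p, hp, hstar⟩
    refine ⟨p, hp, fun i j => ?_⟩
    rintro q ⟨u1, u2, h1, h2, hsum, rfl⟩
    have hz : α i * β j ∈ S := mem_image2_of_mem (hαK1 i) (hβK2 j)
    have := hstar _ hz u2 ⟨h2, by linarith⟩
    have heq : (1 - (u2:ℂ)) * p + (u2 : ℂ) * (α i * β j) = u1 • p + u2 • (α i * β j) := by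
      rw [Complex.real_smul, Complex.real_smul, show u1 = 1 - u2 by linarith]
      push_cast
      ring
    rwa [heq] at this
  · rintro ⟨p, hp, hseg⟩
    by_cases h0 : (0:ℂ) ∈ K1 ∨ (0:ℂ) ∈ K2
    · -- star center 0
      obtain ⟨p1, hp1, p2, hp2, -⟩ := hp
      have h0S : (0:ℂ) ∈ S := by
        rcases h0 with h | h
        · exact ⟨0, h, p2, hp2, by simp⟩
        · exact ⟨p1, hp1, 0, h, by simp⟩
      refine ⟨0, h0S, ?_⟩
      rintro z ⟨a, ha, b, hb, rfl⟩ t ht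
      simp only [mul_zero, zero_add]
      rcases h0 with h | h
      · refine ⟨t • a, ?_, b, hb, ?_⟩
        · have := hK1conv h ha (by linarith [ht.2] : (0:ℝ) ≤ 1 - t) ht.1 (by ring)
          simpa using this
        · show t • a * b = (t:ℂ) * (a * b)
          rw [smul_mul_assoc, Complex.real_smul]
      · refine ⟨a, ha, t • b, ?_, ?_⟩
        · have := hK2conv h hb (by linarith [ht.2] : (0:ℝ) ≤ 1 - t) ht.1 (by ring)
          simpa using this
        · show a * t • b = (t:ℂ) * (a * b)
          rw [mul_smul_comm, Complex.real_smul]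
    · push_neg at h0
      have hK1cl : IsClosed K1 := hK1 ▸ ((Set.finite_range α).isCompact_convexHull ℝ).isClosed
      have hK2cl : IsClosed K2 := hK2 ▸ ((Set.finite_range β).isCompact_convexHull ℝ).isClosed
      obtain ⟨w1, hw1⟩ := exists_halfplane hK1conv hK1cl h0.1
      obtain ⟨w2, hw2⟩ := exists_halfplane hK2conv hK2cl h0.2
      set W := w1 * w2 with hW
      have good : ∀ z ∈ S, ((z * (starRingEnd ℂ) W).im = 0 → 0 < (z * (starRingEnd ℂ) W).re) := by
        rintro z ⟨a, ha, b, hb, rfl⟩ him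
        have hid : (a * b : ℂ) * (starRingEnd ℂ) W
            = (a * (starRingEnd ℂ) w1) * (b * (starRingEnd ℂ) w2) := by
          rw [hW, map_mul]; ring
        rw [hid] at him ⊢
        exact posre (hw1 a ha) (hw2 b hb) him
      have hrad : ∀ z ∈ S, z ≠ 0 → ∀ r ρ : ℝ, r • z ∈ S → 1 ≤ ρ → ρ ≤ r → ρ • z ∈ S := by
        rintro z ⟨a1, ha1, b1, hb1, rfl⟩ hzne r ρ hrz h1ρ hρr
        obtain ⟨a2, ha2, b2, hb2, hr⟩ := hrz
        obtain ⟨a, ha, b, hb, hab⟩ := radial hK1conv hK2conv ha1 hb1 ha2 hb2 hzne hr h1ρ hρr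
        exact ⟨a, ha, b, hb, hab⟩
      -- Step A
      have stepA : ∀ i : Fin n, ∀ b ∈ K2, segment ℝ p (α i * b) ⊆ S := by
        intro i b hb
        set ti : Finset ℂ := insert p (Finset.image (fun j => α i * β j) Finset.univ) with hti
        have hsegs : ∀ x ∈ ti, ∀ y ∈ ti, segment ℝ x y ⊆ S := by
          intro x hx y hy
          rw [hti, Finset.mem_insert] at hx hy
          rcases hx with rfl | hx
          · rcases hy with rfl | hy
            · rw [segment_same]
              exact Set.singleton_subset_iff.2 hp
            · obtain ⟨j, -, rfl⟩ := Finset.mem_image.1 hy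
              exact hseg i j
          · obtain ⟨j, -, rfl⟩ := Finset.mem_image.1 hx
            rcases hy with rfl | hy
            · rw [segment_symm]
              exact hseg i j
            · obtain ⟨l, -, rfl⟩ := Finset.mem_image.1 hy
              rintro q ⟨u1, u2, hu1, hu2, husum, rfl⟩
              rw [show u1 • (α i * β j) + u2 • (α i * β l)
                  = α i * (u1 • β j + u2 • β l) by
                rw [mul_add, mul_smul_comm, mul_smul_comm]]
              exact mem_image2_of_mem (hαK1 i)
                (hK2conv (hβK2 j) (hβK2 l) hu1 hu2 husum)
        have hfill := fill S W good hrad ti hsegs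
        have hphull : p ∈ convexHull ℝ (ti : Set ℂ) :=
          subset_convexHull ℝ _ (by rw [hti]; simp)
        have habhull : α i * b ∈ convexHull ℝ (ti : Set ℂ) := by
          have h1 : α i * b ∈ (LinearMap.mulLeft ℝ (α i)) '' (convexHull ℝ (Set.range β)) :=
            ⟨b, hK2 ▸ hb, rfl⟩
          rw [LinearMap.image_convexHull] at h1
          refine convexHull_mono ?_ h1
          rintro x ⟨y, ⟨j, rfl⟩, rfl⟩
          rw [hti]
          simp only [Finset.coe_insert, Finset.coe_image, Finset.coe_univ, Set.image_univ]
          exact Set.mem_insert_of_mem _ ⟨j, rfl⟩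
        intro q hq
        exact hfill ((convex_convexHull ℝ _).segment_subset hphull habhull hq)
      -- Step B
      have stepB : ∀ a ∈ K1, ∀ b ∈ K2, segment ℝ p (a * b) ⊆ S := by
        intro a ha b hb
        set tb : Finset ℂ := insert p (Finset.image (fun i => α i * b) Finset.univ) with htb
        have hsegs : ∀ x ∈ tb, ∀ y ∈ tb, segment ℝ x y ⊆ S := by
          intro x hx y hy
          rw [htb, Finset.mem_insert] at hx hy
          rcases hx with rfl | hx
          · rcases hy with rfl | hy
            · rw [segment_same]
              exact Set.singleton_subset_iff.2 hp
            · obtain ⟨i, -, rfl⟩ := Finset.mem_image.1 hy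
              exact stepA i b hb
          · obtain ⟨i, -, rfl⟩ := Finset.mem_image.1 hx
            rcases hy with rfl | hy
            · rw [segment_symm]
              exact stepA i b hb
            · obtain ⟨k, -, rfl⟩ := Finset.mem_image.1 hy
              rintro q ⟨u1, u2, hu1, hu2, husum, rfl⟩
              rw [show u1 • (α i * b) + u2 • (α k * b)
                  = (u1 • α i + u2 • α k) * b by
                rw [add_mul, smul_mul_assoc, smul_mul_assoc]]
              exact mem_image2_of_mem (hK1conv (hαK1 i) (hαK1 k) hu1 hu2 husum) hb
        have hfill := fill S W good hrad tb hsegs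
        have hphull : p ∈ convexHull ℝ (tb : Set ℂ) :=
          subset_convexHull ℝ _ (by rw [htb]; simp)
        have habhull : a * b ∈ convexHull ℝ (tb : Set ℂ) := by
          have h1 : a * b ∈ (LinearMap.mulRight ℝ b) '' (convexHull ℝ (Set.range α)) :=
            ⟨a, hK1 ▸ ha, rfl⟩
          rw [LinearMap.image_convexHull] at h1
          refine convexHull_mono ?_ h1
          rintro x ⟨y, ⟨i, rfl⟩, rfl⟩
          rw [htb]
          simp only [Finset.coe_insert, Finset.coe_image, Finset.coe_univ, Set.image_univ]
          exact Set.mem_insert_of_mem _ ⟨i, rfl⟩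
        intro q hq
        exact hfill ((convex_convexHull ℝ _).segment_subset hphull habhull hq)
      refine ⟨p, hp, ?_⟩
      rintro z ⟨a, ha, b, hb, rfl⟩ t ht
      apply stepB a ha b hb
      refine ⟨1 - t, t, by linarith [ht.2], ht.1, by ring, ?_⟩
      rw [Complex.real_smul, Complex.real_smul]
      push_cast
      ring
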